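/- Assume good X and good X'. If y ∉ {x,x'}, fresh xs y X, fresh xs y X', and X[(Var xs y)/x]_xs = X'[(Var xs y)/x']_xs, then Abs xs x X = Abs xs x' X'. -/

import Mathlib

open scoped Classical

universe u

section Binding

variable (var varsort index bindex opsym : Type u)

/-! ### Inputs -/

/-- An `(α,β)`-input: a partial function from `α` to `β`. -/
abbrev Input (α β : Type u) : Type u := α → Option β

/-- The domain of an input. -/
def idom {α β : Type u} (inp : Input α β) : Set α := {a | inp a ≠ none}

/-- The componentwise lifting of a predicate to inputs. -/
def liftP {α β : Type u} (P : β → Prop) (inp : Input α β) : Prop :=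
  ∀ a b, inp a = some b → P b

/-- The componentwise lifting of a function to inputs. -/
def liftF {α β γ : Type u} (f : β → γ) (inp : Input α β) : Input α γ :=
  fun a => (inp a).map f

/-- An input is small if its domain has cardinality smaller than that of `var`. -/
def smallDom {α β : Type u} (inp : Input α β) : Prop :=
  Cardinal.mk (idom inp) < Cardinal.mk var

/-! ### Quasiterms -/

mutual
/-- Quasiterms: raw terms before quotienting by alpha-equivalence. -/
inductive QTerm : Type u where
  | qVar : varsort → var → QTerm
  | qOp : opsym → (index → Option QTerm) → (bindex → Option QAbs) → QTerm
/-- Quasiabstractions. -/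
inductive QAbs : Type u where
  | qAbs : varsort → var → QTerm → QAbs
end

/-- Transposition of two variables. -/
noncomputable def swapVar (z1 z2 x : var) : var :=
  if x = z1 then z2 else if x = z2 then z1 else x

/-- Sort-aware transposition of variables (acts only on variables of varsort `zs`). -/
noncomputable def swapVarS (zs xs : varsort) (z1 z2 x : var) : var :=
  if xs = zs then swapVar var z1 z2 x else x

variable {var varsort index bindex opsym}

/-- Swapping of the variables `z1`, `z2` at varsort `zs` in a quasiterm
(transposing them everywhere, including binding positions). -/
noncomputable def qSwap (z1 z2 : var) (zs : varsort) :
    QTerm var varsort index bindex opsym → QTerm var varsort index bindex opsym :=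
  QTerm.rec (motive_1 := fun _ => QTerm var varsort index bindex opsym)
    (motive_2 := fun _ => QAbs var varsort index bindex opsym)
    (motive_3 := fun _ => Option (QTerm var varsort index bindex opsym))
    (motive_4 := fun _ => Option (QAbs var varsort index bindex opsym))
    (fun xs x => .qVar xs (swapVarS var varsort zs xs z1 z2 x))
    (fun d _ _ rinp rbinp => .qOp d rinp rbinp)
    (fun xs x _ rX => .qAbs xs (swapVarS var varsort zs xs z1 z2 x) rX)
    none (fun _ r => some r) none (fun _ r => some r)

/-- Swapping of variables in a quasiabstraction. -/
noncomputable def qSwapAbs (z1 z2 : var) (zs : varsort) :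
    QAbs var varsort index bindex opsym → QAbs var varsort index bindex opsym
  | .qAbs xs x X => .qAbs xs (swapVarS var varsort zs xs z1 z2 x) (qSwap z1 z2 zs X)

/-! ### Freshness and goodness -/

mutual
/-- `QFresh ys y X`: the variable `y` of varsort `ys` has no free occurrence in `X`. -/
inductive QFresh : varsort → var → QTerm var varsort index bindex opsym → Prop where
  | qVar : ∀ {ys y xs x}, (ys, y) ≠ (xs, x) → QFresh ys y (.qVar xs x)
  | qOp : ∀ {ys y d inp binp}, (∀ i X, inp i = some X → QFresh ys y X) →
      (∀ j A, binp j = some A → QFreshAbs ys y A) → QFresh ys y (.qOp d inp binp)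
/-- Freshness for quasiabstractions. -/
inductive QFreshAbs : varsort → var → QAbs var varsort index bindex opsym → Prop where
  | qAbs_bound : ∀ {xs x X}, QFreshAbs xs x (.qAbs xs x X)
  | qAbs_body : ∀ {ys y xs x X}, QFresh ys y X → QFreshAbs ys y (.qAbs xs x X)
end

mutual
/-- Good quasiterms: all constructors branch less than `|var|`. -/
inductive QGood : QTerm var varsort index bindex opsym → Prop where
  | qVar : ∀ {xs x}, QGood (.qVar xs x)
  | qOp : ∀ {d inp binp}, (∀ i X, inp i = some X → QGood X) →
      (∀ j A, binp j = some A → QGoodAbs A) →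
      smallDom var inp → smallDom var binp → QGood (.qOp d inp binp)
/-- Good quasiabstractions. -/
inductive QGoodAbs : QAbs var varsort index bindex opsym → Prop where
  | qAbs : ∀ {xs x X}, QGood X → QGoodAbs (.qAbs xs x X)
end

/-! ### Alpha-equivalence -/

mutual
/-- Alpha-equivalence of quasiterms. -/
inductive Alpha : QTerm var varsort index bindex opsym →
    QTerm var varsort index bindex opsym → Prop where
  | qVar : ∀ {xs x}, Alpha (.qVar xs x) (.qVar xs x)
  | qOp : ∀ {d inp binp inp' binp'},
      (∀ i, inp i = none ↔ inp' i = none) →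
      (∀ i X X', inp i = some X → inp' i = some X' → Alpha X X') →
      (∀ j, binp j = none ↔ binp' j = none) →
      (∀ j A A', binp j = some A → binp' j = some A' → AlphaAbs A A') →
      Alpha (.qOp d inp binp) (.qOp d inp' binp')
/-- Alpha-equivalence of quasiabstractions (the exists-fresh formulation). -/
inductive AlphaAbs : QAbs var varsort index bindex opsym →
    QAbs var varsort index bindex opsym → Prop where
  | qAbs : ∀ {xs x x' X X' y}, y ∉ ({x, x'} : Set var) →
      QFresh xs y X → QFresh xs y X' →
      Alpha (qSwap y x xs X) (qSwap y x' xs X') →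
      AlphaAbs (.qAbs xs x X) (.qAbs xs x' X')
end

/-! ### Terms and abstractions as quotients -/

variable (var varsort index bindex opsym)

/-- Terms: quasiterms modulo alpha-equivalence. -/
def Term : Type u := Quot (@Alpha var varsort index bindex opsym)

/-- Abstractions: quasiabstractions modulo alpha-equivalence. -/
def Abstr : Type u := Quot (@AlphaAbs var varsort index bindex opsym)

variable {var varsort index bindex opsym}

/-- The projection from quasiterms to terms. -/
def tmk : QTerm var varsort index bindex opsym → Term var varsort index bindex opsym :=
  Quot.mk _

/-- The projection from quasiabstractions to abstractions. -/
def amk : QAbs var varsort index bindex opsym → Abstr var varsort index bindex opsym :=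
  Quot.mk _

/-- A representative of a term. -/
noncomputable def trep (X : Term var varsort index bindex opsym) :
    QTerm var varsort index bindex opsym := Quot.out X

/-- A representative of an abstraction. -/
noncomputable def arep (A : Abstr var varsort index bindex opsym) :
    QAbs var varsort index bindex opsym := Quot.out A

/-- Good terms. -/
def good (X : Term var varsort index bindex opsym) : Prop := QGood (trep X)

/-- Good abstractions. -/
def goodAbs (A : Abstr var varsort index bindex opsym) : Prop := QGoodAbs (arep A)

/-- The variable-injection constructor on terms. -/
def Var (xs : varsort) (x : var) : Term var varsort index bindex opsym :=
  tmk (.qVar xs x)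

/-- The operation constructor on terms. -/
noncomputable def Op (d : opsym) (inp : Input index (Term var varsort index bindex opsym))
    (binp : Input bindex (Abstr var varsort index bindex opsym)) :
    Term var varsort index bindex opsym :=
  tmk (.qOp d (liftF trep inp) (liftF arep binp))

/-- The abstraction constructor. -/
noncomputable def Abs (xs : varsort) (x : var) (X : Term var varsort index bindex opsym) :
    Abstr var varsort index bindex opsym :=
  amk (.qAbs xs x (trep X))

/-- Freshness on terms. -/
def fresh (ys : varsort) (y : var) (X : Term var varsort index bindex opsym) : Prop :=
  QFresh ys y (trep X)

/-- Freshness on abstractions. -/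
def freshAbs (ys : varsort) (y : var) (A : Abstr var varsort index bindex opsym) : Prop :=
  QFreshAbs ys y (arep A)

/-- Swapping on terms. -/
noncomputable def tswap (X : Term var varsort index bindex opsym)
    (z1 z2 : var) (zs : varsort) : Term var varsort index bindex opsym :=
  tmk (qSwap z1 z2 zs (trep X))

/-! ### Substitution -/

mutual
/-- The graph of capture-avoiding substitution on quasiterms:
`QSubst X Y y ys Z` means that `Z` is a result of substituting `Y` for the free
occurrences of the variable `y` of varsort `ys` in `X` (along a capture-free
representative). -/
inductive QSubst : QTerm var varsort index bindex opsym →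
    QTerm var varsort index bindex opsym → var → varsort →
    QTerm var varsort index bindex opsym → Prop where
  | var_eq : ∀ {Y y ys}, QSubst (.qVar ys y) Y y ys Y
  | var_ne : ∀ {Y y ys xs x}, (xs, x) ≠ (ys, y) → QSubst (.qVar xs x) Y y ys (.qVar xs x)
  | op : ∀ {Y y ys d inp binp inp' binp'},
      (∀ i, inp i = none ↔ inp' i = none) →
      (∀ i X X', inp i = some X → inp' i = some X' → QSubst X Y y ys X') →
      (∀ j, binp j = none ↔ binp' j = none) →
      (∀ j A A', binp j = some A → binp' j = some A' → QSubstAbs A Y y ys A') →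
      QSubst (.qOp d inp binp) Y y ys (.qOp d inp' binp')
/-- The graph of capture-avoiding substitution on quasiabstractions. -/
inductive QSubstAbs : QAbs var varsort index bindex opsym →
    QTerm var varsort index bindex opsym → var → varsort →
    QAbs var varsort index bindex opsym → Prop where
  | abs : ∀ {Y y ys xs x X X'}, (xs, x) ≠ (ys, y) → QFresh xs x Y →
      QSubst X Y y ys X' → QSubstAbs (.qAbs xs x X) Y y ys (.qAbs xs x X')
end

/-- The graph of capture-avoiding substitution on terms. -/
def SubstRel (X Y : Term var varsort index bindex opsym) (y : var) (ys : varsort)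
    (Z : Term var varsort index bindex opsym) : Prop :=
  ∃ qX qZ, tmk qX = X ∧ tmk qZ = Z ∧ QSubst qX (trep Y) y ys qZ

/-- Capture-avoiding substitution on terms: `subst X Y y ys` is `X[Y/y]_ys`. -/
noncomputable def subst (X Y : Term var varsort index bindex opsym)
    (y : var) (ys : varsort) : Term var varsort index bindex opsym :=
  if h : ∃ Z, SubstRel X Y y ys Z then h.choose else X

/-- The graph of capture-avoiding substitution on abstractions. -/
def SubstAbsRel (A : Abstr var varsort index bindex opsym)
    (Y : Term var varsort index bindex opsym) (y : var) (ys : varsort)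
    (B : Abstr var varsort index bindex opsym) : Prop :=
  ∃ qA qB, amk qA = A ∧ amk qB = B ∧ QSubstAbs qA (trep Y) y ys qB

/-- Capture-avoiding substitution on abstractions: `substAbs A Y y ys` is `A[Y/y]_ys`. -/
noncomputable def substAbs (A : Abstr var varsort index bindex opsym)
    (Y : Term var varsort index bindex opsym) (y : var) (ys : varsort) :
    Abstr var varsort index bindex opsym :=
  if h : ∃ B, SubstAbsRel A Y y ys B then h.choose else A

/-! ### Parallel substitution -/

mutual
/-- The graph of capture-avoiding parallel substitution on quasiterms, along an
assignment `ρ : varsort → var → Option qterm`. -/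
inductive QPSubst : QTerm var varsort index bindex opsym →
    (varsort → var → Option (QTerm var varsort index bindex opsym)) →
    QTerm var varsort index bindex opsym → Prop where
  | var_some : ∀ {ρ xs x Y}, ρ xs x = some Y → QPSubst (.qVar xs x) ρ Y
  | var_none : ∀ {ρ xs x}, ρ xs x = none → QPSubst (.qVar xs x) ρ (.qVar xs x)
  | op : ∀ {ρ d inp binp inp' binp'},
      (∀ i, inp i = none ↔ inp' i = none) →
      (∀ i X X', inp i = some X → inp' i = some X' → QPSubst X ρ X') →
      (∀ j, binp j = none ↔ binp' j = none) →
      (∀ j A A', binp j = some A → binp' j = some A' → QPSubstAbs A ρ A') →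
      QPSubst (.qOp d inp binp) ρ (.qOp d inp' binp')
/-- The graph of capture-avoiding parallel substitution on quasiabstractions. -/
inductive QPSubstAbs : QAbs var varsort index bindex opsym →
    (varsort → var → Option (QTerm var varsort index bindex opsym)) →
    QAbs var varsort index bindex opsym → Prop where
  | abs : ∀ {ρ xs x X X'}, ρ xs x = none →
      (∀ ys y Y, ρ ys y = some Y → QFresh xs x Y) →
      QPSubst X ρ X' → QPSubstAbs (.qAbs xs x X) ρ (.qAbs xs x X')
end

/-- Turning a term-valued assignment into a quasiterm-valued one, by picking
representatives. -/
noncomputable def qassign (ρ : varsort → var → Option (Term var varsort index bindex opsym)) :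
    varsort → var → Option (QTerm var varsort index bindex opsym) :=
  fun xs x => (ρ xs x).map trep

/-- The graph of parallel substitution on terms. -/
def PSubstRel (X : Term var varsort index bindex opsym)
    (ρ : varsort → var → Option (Term var varsort index bindex opsym))
    (Z : Term var varsort index bindex opsym) : Prop :=
  ∃ qX qZ, tmk qX = X ∧ tmk qZ = Z ∧ QPSubst qX (qassign ρ) qZ

/-- Capture-avoiding parallel substitution on terms: `psubst X ρ` is `X[ρ]`. -/
noncomputable def psubst (X : Term var varsort index bindex opsym)
    (ρ : varsort → var → Option (Term var varsort index bindex opsym)) :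
    Term var varsort index bindex opsym :=
  if h : ∃ Z, PSubstRel X ρ Z then h.choose else X

/-- The graph of parallel substitution on abstractions. -/
def PSubstAbsRel (A : Abstr var varsort index bindex opsym)
    (ρ : varsort → var → Option (Term var varsort index bindex opsym))
    (B : Abstr var varsort index bindex opsym) : Prop :=
  ∃ qA qB, amk qA = A ∧ amk qB = B ∧ QPSubstAbs qA (qassign ρ) qB

/-- Capture-avoiding parallel substitution on abstractions. -/
noncomputable def psubstAbs (A : Abstr var varsort index bindex opsym)
    (ρ : varsort → var → Option (Term var varsort index bindex opsym)) :
    Abstr var varsort index bindex opsym :=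
  if h : ∃ B, PSubstAbsRel A ρ B then h.choose else A


/-! ### Development: basic swap lemmas -/

section Dev
variable {var varsort index bindex opsym : Type u}

theorem swapVar_invol (z1 z2 x : var) : swapVar var z1 z2 (swapVar var z1 z2 x) = x := by
  unfold swapVar; split_ifs <;> simp_all

theorem swapVar_comp (z1 z2 a b v : var) :
    swapVar var z1 z2 (swapVar var a b v) =
      swapVar var (swapVar var z1 z2 a) (swapVar var z1 z2 b) (swapVar var z1 z2 v) := by
  unfold swapVar; split_ifs <;> simp_all

theorem swapVarS_invol (zs xs : varsort) (z1 z2 x : var) :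
    swapVarS var varsort zs xs z1 z2 (swapVarS var varsort zs xs z1 z2 x) = x := by
  unfold swapVarS; split_ifs with h
  · exact swapVar_invol _ _ _
  · rfl

theorem swapVarS_inj (zs xs : varsort) (z1 z2 : var) {a b : var}
    (h : swapVarS var varsort zs xs z1 z2 a = swapVarS var varsort zs xs z1 z2 b) : a = b := by
  have := congrArg (swapVarS var varsort zs xs z1 z2) h
  rwa [swapVarS_invol, swapVarS_invol] at this

theorem swapVarS_comp (zs xs us : varsort) (z1 z2 a b v : var) :
    swapVarS var varsort zs xs z1 z2 (swapVarS var varsort us xs a b v) =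
      swapVarS var varsort us xs (swapVarS var varsort zs us z1 z2 a)
        (swapVarS var varsort zs us z1 z2 b) (swapVarS var varsort zs xs z1 z2 v) := by
  unfold swapVarS
  by_cases h1 : xs = zs <;> by_cases h2 : xs = us
  · have h3 : us = zs := h1 ▸ h2.symm ▸ rfl
    simp only [if_pos h1, if_pos h2, if_pos h3]
    exact swapVar_comp _ _ _ _ _
  · have h3 : ¬ us = zs := fun h => h2 (h1.trans h.symm)
    simp only [if_pos h1, if_neg h2, if_neg h3]
  · have h3 : ¬ us = zs := fun h => h1 (h2.trans h)
    simp only [if_neg h1, if_pos h2, if_neg h3]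
  · simp only [if_neg h1, if_neg h2]

end Dev

set_option maxRecDepth 4000

section Dev2
variable {var varsort index bindex opsym : Type u}

@[simp] theorem qSwap_qVar (z1 z2 : var) (zs xs : varsort) (x : var) :
    qSwap z1 z2 zs (QTerm.qVar xs x : QTerm var varsort index bindex opsym)
      = .qVar xs (swapVarS var varsort zs xs z1 z2 x) := rfl

@[simp] theorem qSwapAbs_qAbs (z1 z2 : var) (zs xs : varsort) (x : var)
    (X : QTerm var varsort index bindex opsym) :
    qSwapAbs z1 z2 zs (QAbs.qAbs xs x X)
      = .qAbs xs (swapVarS var varsort zs xs z1 z2 x) (qSwap z1 z2 zs X) := rfl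

@[simp] theorem qSwap_qOp (z1 z2 : var) (zs : varsort) (d : opsym)
    (inp : index → Option (QTerm var varsort index bindex opsym))
    (binp : bindex → Option (QAbs var varsort index bindex opsym)) :
    qSwap z1 z2 zs (QTerm.qOp d inp binp)
      = .qOp d (fun i => (inp i).map (qSwap z1 z2 zs)) (fun j => (binp j).map (qSwapAbs z1 z2 zs)) := by
  show QTerm.qOp d _ _ = _
  congr 1
  · funext i; cases inp i <;> rfl
  · funext j
    cases binp j with
    | none => rfl
    | some A => cases A <;> rfl

/-- Mutual structural induction for quasiterms and quasiabstractions. -/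
theorem qterm_qabs_ind {P : QTerm var varsort index bindex opsym → Prop}
    {Q : QAbs var varsort index bindex opsym → Prop}
    (hvar : ∀ xs x, P (.qVar xs x))
    (hop : ∀ d inp binp, (∀ i X, inp i = some X → P X) → (∀ j A, binp j = some A → Q A) →
      P (.qOp d inp binp))
    (habs : ∀ xs x X, P X → Q (.qAbs xs x X)) :
    (∀ X, P X) ∧ (∀ A, Q A) := by
  have h1 : ∀ X, P X := fun X => QTerm.rec (motive_1 := fun X => P X) (motive_2 := fun A => Q A)
    (motive_3 := fun o => ∀ X, o = some X → P X) (motive_4 := fun o => ∀ A, o = some A → Q A)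
    hvar
    (fun d inp binp rinp rbinp => hop d inp binp (fun i X h => rinp i X h) (fun j A h => rbinp j A h))
    (fun xs x X rX => habs xs x X rX)
    (fun X h => by cases h) (fun X rX X' h => by cases h; exact rX)
    (fun A h => by cases h) (fun A rA A' h => by cases h; exact rA) X
  refine ⟨h1, fun A => ?_⟩
  cases A with
  | qAbs xs x X => exact habs xs x X (h1 X)

theorem qSwap_invol_pair :
    (∀ X : QTerm var varsort index bindex opsym, ∀ z1 z2 zs,
        qSwap z1 z2 zs (qSwap z1 z2 zs X) = X) ∧
    (∀ A : QAbs var varsort index bindex opsym, ∀ z1 z2 zs,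
        qSwapAbs z1 z2 zs (qSwapAbs z1 z2 zs A) = A) := by
  apply qterm_qabs_ind
  · intro xs x z1 z2 zs; simp [swapVarS_invol]
  · intro d inp binp ih1 ih2 z1 z2 zs
    simp only [qSwap_qOp]
    congr 1
    · funext i
      cases h : inp i with
      | none => simp
      | some X => simp [ih1 i X h]
    · funext j
      cases h : binp j with
      | none => simp
      | some A => simp [ih2 j A h]
  · intro xs x X ih z1 z2 zs
    simp [swapVarS_invol, ih]

theorem qSwap_invol (z1 z2 : var) (zs : varsort) (X : QTerm var varsort index bindex opsym) :
    qSwap z1 z2 zs (qSwap z1 z2 zs X) = X := qSwap_invol_pair.1 X z1 z2 zs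

theorem qSwapAbs_invol (z1 z2 : var) (zs : varsort) (A : QAbs var varsort index bindex opsym) :
    qSwapAbs z1 z2 zs (qSwapAbs z1 z2 zs A) = A := qSwap_invol_pair.2 A z1 z2 zs

theorem qSwap_comm_pair :
    (∀ X : QTerm var varsort index bindex opsym, ∀ z1 z2 zs a b as,
        qSwap z1 z2 zs (qSwap a b as X)
          = qSwap (swapVarS var varsort zs as z1 z2 a) (swapVarS var varsort zs as z1 z2 b) as
              (qSwap z1 z2 zs X)) ∧
    (∀ A : QAbs var varsort index bindex opsym, ∀ z1 z2 zs a b as,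
        qSwapAbs z1 z2 zs (qSwapAbs a b as A)
          = qSwapAbs (swapVarS var varsort zs as z1 z2 a) (swapVarS var varsort zs as z1 z2 b) as
              (qSwapAbs z1 z2 zs A)) := by
  apply qterm_qabs_ind
  · intro xs x z1 z2 zs a b as
    simp only [qSwap_qVar]
    rw [swapVarS_comp]
  · intro d inp binp ih1 ih2 z1 z2 zs a b as
    simp only [qSwap_qOp]
    congr 1
    · funext i
      cases h : inp i with
      | none => rfl
      | some X => exact congrArg some (ih1 i X h z1 z2 zs a b as)
    · funext j
      cases h : binp j with
      | none => rfl
      | some A => exact congrArg some (ih2 j A h z1 z2 zs a b as)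
  · intro xs x X ih z1 z2 zs a b as
    simp only [qSwapAbs_qAbs]
    rw [swapVarS_comp, ih]

theorem qSwap_comm (z1 z2 : var) (zs : varsort) (a b : var) (as : varsort)
    (X : QTerm var varsort index bindex opsym) :
    qSwap z1 z2 zs (qSwap a b as X)
      = qSwap (swapVarS var varsort zs as z1 z2 a) (swapVarS var varsort zs as z1 z2 b) as
          (qSwap z1 z2 zs X) := qSwap_comm_pair.1 X z1 z2 zs a b as

/-! ### Iterated swaps -/

/-- Apply a list of swaps to a quasiterm. -/
noncomputable def swaps (l : List (var × var × varsort)) (X : QTerm var varsort index bindex opsym) :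
    QTerm var varsort index bindex opsym :=
  l.foldr (fun p Y => qSwap p.1 p.2.1 p.2.2 Y) X

noncomputable def swapsAbs (l : List (var × var × varsort)) (A : QAbs var varsort index bindex opsym) :
    QAbs var varsort index bindex opsym :=
  l.foldr (fun p B => qSwapAbs p.1 p.2.1 p.2.2 B) A

/-- Apply a list of swaps to a variable of sort `xs`. -/
noncomputable def swapsVar (l : List (var × var × varsort)) (xs : varsort) (v : var) : var :=
  l.foldr (fun p w => swapVarS var varsort p.2.2 xs p.1 p.2.1 w) v

@[simp] theorem swaps_nil (X : QTerm var varsort index bindex opsym) : swaps [] X = X := rfl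
@[simp] theorem swapsAbs_nil (A : QAbs var varsort index bindex opsym) : swapsAbs [] A = A := rfl
@[simp] theorem swaps_cons (p : var × var × varsort) (l) (X : QTerm var varsort index bindex opsym) :
    swaps (p :: l) X = qSwap p.1 p.2.1 p.2.2 (swaps l X) := rfl
@[simp] theorem swapsAbs_cons (p : var × var × varsort) (l) (A : QAbs var varsort index bindex opsym) :
    swapsAbs (p :: l) A = qSwapAbs p.1 p.2.1 p.2.2 (swapsAbs l A) := rfl
@[simp] theorem swapsVar_nil (xs : varsort) (v : var) :
    swapsVar (var := var) (varsort := varsort) [] xs v = v := rfl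
@[simp] theorem swapsVar_cons (p : var × var × varsort) (l) (xs : varsort) (v : var) :
    swapsVar (p :: l) xs v = swapVarS var varsort p.2.2 xs p.1 p.2.1 (swapsVar l xs v) := rfl

theorem swaps_qVar (l) (xs : varsort) (x : var) :
    swaps l (QTerm.qVar xs x : QTerm var varsort index bindex opsym)
      = .qVar xs (swapsVar l xs x) := by
  induction l with
  | nil => rfl
  | cons p l ih => simp [ih]

theorem swaps_qOp (l) (d : opsym) (inp : index → Option (QTerm var varsort index bindex opsym))
    (binp : bindex → Option (QAbs var varsort index bindex opsym)) :
    swaps l (QTerm.qOp d inp binp)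
      = .qOp d (fun i => (inp i).map (swaps l)) (fun j => (binp j).map (swapsAbs l)) := by
  induction l with
  | nil =>
    simp only [swaps_nil]
    congr 1
    · funext i; cases inp i <;> rfl
    · funext j; cases binp j <;> rfl
  | cons p l ih =>
    simp only [swaps_cons, ih, qSwap_qOp]
    congr 1
    · funext i; cases inp i <;> simp
    · funext j; cases binp j <;> simp

theorem swapsAbs_qAbs (l) (xs : varsort) (x : var) (X : QTerm var varsort index bindex opsym) :
    swapsAbs l (QAbs.qAbs xs x X) = .qAbs xs (swapsVar l xs x) (swaps l X) := by
  induction l with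
  | nil => rfl
  | cons p l ih => simp [ih]

end Dev2

section Dev3
variable {var varsort index bindex opsym : Type u}

/-! ### The set of variables occurring in a quasiterm -/

noncomputable def varOf : QTerm var varsort index bindex opsym → Set var :=
  QTerm.rec (motive_1 := fun _ => Set var) (motive_2 := fun _ => Set var)
    (motive_3 := fun _ => Set var) (motive_4 := fun _ => Set var)
    (fun _ x => {x})
    (fun _ _ _ rinp rbinp => (⋃ i, rinp i) ∪ ⋃ j, rbinp j)
    (fun _ x _ rX => insert x rX)
    ∅ (fun _ r => r) ∅ (fun _ r => r)

noncomputable def varOfAbs : QAbs var varsort index bindex opsym → Set var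
  | .qAbs _ x X => insert x (varOf X)

@[simp] theorem varOf_qVar (xs : varsort) (x : var) :
    varOf (QTerm.qVar xs x : QTerm var varsort index bindex opsym) = {x} := rfl

@[simp] theorem varOfAbs_qAbs (xs : varsort) (x : var) (X : QTerm var varsort index bindex opsym) :
    varOfAbs (QAbs.qAbs xs x X) = insert x (varOf X) := rfl

@[simp] theorem varOf_qOp (d : opsym) (inp : index → Option (QTerm var varsort index bindex opsym))
    (binp : bindex → Option (QAbs var varsort index bindex opsym)) :
    varOf (QTerm.qOp d inp binp)
      = (⋃ i, (inp i).elim ∅ varOf) ∪ ⋃ j, (binp j).elim ∅ varOfAbs := by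
  show ((⋃ _, _) ∪ ⋃ _, _ : Set var) = _
  congr 1
  · exact Set.iUnion_congr fun i => by cases inp i <;> rfl
  · exact Set.iUnion_congr fun j => by
      cases binp j with
      | none => rfl
      | some A => cases A <;> rfl

theorem qFresh_of_notMem_varOf_pair :
    (∀ X : QTerm var varsort index bindex opsym, ∀ ys (v : var), v ∉ varOf X → QFresh ys v X) ∧
    (∀ A : QAbs var varsort index bindex opsym, ∀ ys (v : var), v ∉ varOfAbs A → QFreshAbs ys v A) := by
  apply qterm_qabs_ind
  · intro xs x ys v hv
    simp only [varOf_qVar, Set.mem_singleton_iff] at hv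
    exact QFresh.qVar (fun h => hv (congrArg Prod.snd h))
  · intro d inp binp ih1 ih2 ys v hv
    simp only [varOf_qOp, Set.mem_union, not_or] at hv
    refine QFresh.qOp (fun i X h => ih1 i X h ys v fun hm => hv.1 ?_)
      (fun j A h => ih2 j A h ys v fun hm => hv.2 ?_)
    · exact Set.mem_iUnion.2 ⟨i, by rw [h]; exact hm⟩
    · exact Set.mem_iUnion.2 ⟨j, by rw [h]; exact hm⟩
  · intro xs x X ih ys v hv
    simp only [varOfAbs_qAbs, Set.mem_insert_iff, not_or] at hv
    exact QFreshAbs.qAbs_body (ih ys v hv.2)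

theorem qFresh_of_notMem_varOf {X : QTerm var varsort index bindex opsym} {ys v}
    (h : v ∉ varOf X) : QFresh ys v X := qFresh_of_notMem_varOf_pair.1 X ys v h

theorem qFreshAbs_of_notMem_varOfAbs {A : QAbs var varsort index bindex opsym} {ys v}
    (h : v ∉ varOfAbs A) : QFreshAbs ys v A := qFresh_of_notMem_varOf_pair.2 A ys v h

theorem swapVarS_cases (zs xs : varsort) (z1 z2 x : var) :
    swapVarS var varsort zs xs z1 z2 x = x ∨ swapVarS var varsort zs xs z1 z2 x = z1 ∨
      swapVarS var varsort zs xs z1 z2 x = z2 := by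
  unfold swapVarS swapVar; split_ifs <;> simp

theorem varOf_qSwap_subset_pair :
    (∀ X : QTerm var varsort index bindex opsym, ∀ z1 z2 zs,
        varOf (qSwap z1 z2 zs X) ⊆ varOf X ∪ {z1, z2}) ∧
    (∀ A : QAbs var varsort index bindex opsym, ∀ z1 z2 zs,
        varOfAbs (qSwapAbs z1 z2 zs A) ⊆ varOfAbs A ∪ {z1, z2}) := by
  apply qterm_qabs_ind
  · intro xs x z1 z2 zs v hv
    rw [qSwap_qVar, varOf_qVar] at hv
    rw [varOf_qVar]
    have hv' : v = swapVarS var varsort zs xs z1 z2 x := hv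
    rcases swapVarS_cases zs xs z1 z2 x with h | h | h <;> rw [h] at hv' <;> rw [hv']
    · exact Set.mem_union_left _ rfl
    · exact Set.mem_union_right _ (by simp)
    · exact Set.mem_union_right _ (by simp)
  · intro d inp binp ih1 ih2 z1 z2 zs v hv
    rw [qSwap_qOp, varOf_qOp] at hv
    rw [varOf_qOp]
    rcases (Set.mem_union _ _ _).1 hv with hv1 | hv1
    · rcases Set.mem_iUnion.1 hv1 with ⟨i, hi⟩
      cases h : inp i with
      | none => rw [h] at hi; exact absurd hi (by simp)
      | some X =>
        rw [h] at hi
        have hi' : v ∈ varOf (qSwap z1 z2 zs X) := hi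
        rcases (Set.mem_union _ _ _).1 (ih1 i X h z1 z2 zs hi') with hm | hm
        · refine Set.mem_union_left _ (Set.mem_union_left _ (Set.mem_iUnion.2 ⟨i, ?_⟩))
          show v ∈ (inp i).elim ∅ varOf
          rw [h]; exact hm
        · exact Set.mem_union_right _ hm
    · rcases Set.mem_iUnion.1 hv1 with ⟨j, hj⟩
      cases h : binp j with
      | none => rw [h] at hj; exact absurd hj (by simp)
      | some A =>
        rw [h] at hj
        have hj' : v ∈ varOfAbs (qSwapAbs z1 z2 zs A) := hj
        rcases (Set.mem_union _ _ _).1 (ih2 j A h z1 z2 zs hj') with hm | hm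
        · refine Set.mem_union_left _ (Set.mem_union_right _ (Set.mem_iUnion.2 ⟨j, ?_⟩))
          show v ∈ (binp j).elim ∅ varOfAbs
          rw [h]; exact hm
        · exact Set.mem_union_right _ hm
  · intro xs x X ih z1 z2 zs v hv
    rw [qSwapAbs_qAbs, varOfAbs_qAbs] at hv
    rw [varOfAbs_qAbs]
    rcases Set.mem_insert_iff.1 hv with hv1 | hv1
    · rcases swapVarS_cases zs xs z1 z2 x with h | h | h <;> rw [h] at hv1 <;> rw [hv1]
      · exact Set.mem_union_left _ (Set.mem_insert _ _)
      · exact Set.mem_union_right _ (by simp)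
      · exact Set.mem_union_right _ (by simp)
    · rcases (Set.mem_union _ _ _).1 (ih z1 z2 zs hv1) with hm | hm
      · exact Set.mem_union_left _ (Set.mem_insert_of_mem _ hm)
      · exact Set.mem_union_right _ hm

theorem notMem_varOf_qSwap {X : QTerm var varsort index bindex opsym} {v z1 z2 : var} {zs}
    (h : v ∉ varOf X) (h1 : v ≠ z1) (h2 : v ≠ z2) : v ∉ varOf (qSwap z1 z2 zs X) := by
  intro hm
  rcases varOf_qSwap_subset_pair.1 X z1 z2 zs hm with hm | hm
  · exact h hm
  · rcases hm with hm | hm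
    · exact h1 hm
    · exact h2 hm

/-! ### Cardinality facts -/

theorem mk_union_lt (hinf : Cardinal.aleph0 ≤ Cardinal.mk var) {S T : Set var}
    (hS : Cardinal.mk S < Cardinal.mk var) (hT : Cardinal.mk T < Cardinal.mk var) :
    Cardinal.mk (S ∪ T : Set var) < Cardinal.mk var :=
  lt_of_le_of_lt (Cardinal.mk_union_le S T) (Cardinal.add_lt_of_lt hinf hS hT)

theorem mk_insert_lt (hinf : Cardinal.aleph0 ≤ Cardinal.mk var) {S : Set var} {a : var}
    (hS : Cardinal.mk S < Cardinal.mk var) :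
    Cardinal.mk (insert a S : Set var) < Cardinal.mk var :=
  lt_of_le_of_lt Cardinal.mk_insert_le
    (Cardinal.add_lt_of_lt hinf hS (lt_of_lt_of_le Cardinal.one_lt_aleph0 hinf))

theorem exists_notMem {S : Set var} (hS : Cardinal.mk S < Cardinal.mk var) : ∃ u, u ∉ S := by
  by_contra h
  push_neg at h
  have : S = Set.univ := Set.eq_univ_of_forall h
  rw [this, Cardinal.mk_univ] at hS
  exact lt_irrefl _ hS

theorem mk_iUnion_lt (hreg : (Cardinal.mk var).IsRegular) {ι : Type u} (f : ι → Set var)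
    (dom : Set ι) (hdom : Cardinal.mk dom < Cardinal.mk var)
    (hz : ∀ i ∉ dom, f i = ∅) (hf : ∀ i, Cardinal.mk (f i) < Cardinal.mk var) :
    Cardinal.mk (⋃ i, f i) < Cardinal.mk var := by
  have heq : (⋃ i, f i) = ⋃ i : dom, f i := by
    apply Set.Subset.antisymm
    · rintro v hv
      rcases Set.mem_iUnion.1 hv with ⟨i, hi⟩
      by_cases hd : i ∈ dom
      · exact Set.mem_iUnion.2 ⟨⟨i, hd⟩, hi⟩
      · rw [hz i hd] at hi; cases hi
    · rintro v hv
      rcases Set.mem_iUnion.1 hv with ⟨⟨i, _⟩, hi⟩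
      exact Set.mem_iUnion.2 ⟨i, hi⟩
  rw [heq]
  exact lt_of_le_of_lt Cardinal.mk_iUnion_le_sum_mk
    (Cardinal.sum_lt_of_isRegular hreg hdom (fun i => hf i.1))

theorem mk_varOf_lt_pair (hreg : (Cardinal.mk var).IsRegular) :
    (∀ {X : QTerm var varsort index bindex opsym}, QGood X →
      Cardinal.mk (varOf X) < Cardinal.mk var) ∧
    (∀ {A : QAbs var varsort index bindex opsym}, QGoodAbs A →
      Cardinal.mk (varOfAbs A) < Cardinal.mk var) := by
  have hinf : Cardinal.aleph0 ≤ Cardinal.mk var := hreg.aleph0_le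
  have hone : (1 : Cardinal) < Cardinal.mk var := lt_of_lt_of_le Cardinal.one_lt_aleph0 hinf
  have hzero : (0 : Cardinal) < Cardinal.mk var := lt_of_lt_of_le Cardinal.aleph0_pos hinf
  have key : ∀ {X : QTerm var varsort index bindex opsym} (hX : QGood X),
      Cardinal.mk (varOf X) < Cardinal.mk var := by
    intro X hX
    refine QGood.rec (motive_1 := fun X _ => Cardinal.mk (varOf X) < Cardinal.mk var)
      (motive_2 := fun A _ => Cardinal.mk (varOfAbs A) < Cardinal.mk var)
      ?_ ?_ ?_ hX
    · intro xs x
      simpa using hone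
    · intro d inp binp _ _ hs hbs ih1 ih2
      rw [varOf_qOp]
      refine mk_union_lt hinf ?_ ?_
      · refine mk_iUnion_lt hreg _ (idom inp) hs (fun i hi => ?_) (fun i => ?_)
        · have : inp i = none := by
            by_contra hne; exact hi hne
          rw [this]; rfl
        · cases h : inp i with
          | none => simpa using hzero
          | some X => simpa using ih1 i X h
      · refine mk_iUnion_lt hreg _ (idom binp) hbs (fun j hj => ?_) (fun j => ?_)
        · have : binp j = none := by
            by_contra hne; exact hj hne
          rw [this]; rfl
        · cases h : binp j with
          | none => simpa using hzero
          | some A => simpa using ih2 j A h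
    · intro xs x X _ ih
      rw [varOfAbs_qAbs]
      exact mk_insert_lt hinf ih
  refine ⟨key, fun {A} hA => ?_⟩
  cases hA with
  | qAbs hX => rw [varOfAbs_qAbs]; exact mk_insert_lt hinf (key hX)

end Dev3

section Dev4
variable {var varsort index bindex opsym : Type u}

/-! ### Inversion helpers -/

theorem idom_map {α β γ : Type u} (f : β → γ) (inp : α → Option β) :
    idom (fun a => (inp a).map f) = idom inp := by
  ext a
  show Option.map f (inp a) ≠ none ↔ inp a ≠ none
  cases inp a <;> simp

theorem qGood_qOp_inv {d : opsym} {inp : index → Option (QTerm var varsort index bindex opsym)}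
    {binp} (h : QGood (QTerm.qOp d inp binp)) :
    (∀ i X, inp i = some X → QGood X) ∧ (∀ j A, binp j = some A → QGoodAbs A) ∧
      smallDom var inp ∧ smallDom var binp := by
  cases h with
  | qOp h1 h2 h3 h4 => exact ⟨h1, h2, h3, h4⟩

theorem qGoodAbs_inv {xs : varsort} {x : var} {X : QTerm var varsort index bindex opsym}
    (h : QGoodAbs (QAbs.qAbs xs x X)) : QGood X := by
  cases h with
  | qAbs h => exact h

theorem qFreshAbs_inv {ys : varsort} {y : var} {xs x} {X : QTerm var varsort index bindex opsym}
    (h : QFreshAbs ys y (QAbs.qAbs xs x X)) : (ys, y) = (xs, x) ∨ QFresh ys y X := by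
  cases h with
  | qAbs_bound => exact Or.inl rfl
  | qAbs_body h => exact Or.inr h

theorem qFresh_qVar_inv {ys : varsort} {y : var} {xs x}
    (h : QFresh ys y (QTerm.qVar xs x : QTerm var varsort index bindex opsym)) :
    (ys, y) ≠ (xs, x) := by
  cases h with
  | qVar h => exact h

theorem qFresh_qOp_inv {ys : varsort} {y : var} {d : opsym}
    {inp : index → Option (QTerm var varsort index bindex opsym)} {binp}
    (h : QFresh ys y (QTerm.qOp d inp binp)) :
    (∀ i X, inp i = some X → QFresh ys y X) ∧ (∀ j A, binp j = some A → QFreshAbs ys y A) := by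
  cases h with
  | qOp h1 h2 => exact ⟨h1, h2⟩

/-! ### Goodness is preserved by swapping -/

theorem qGood_qSwap {X : QTerm var varsort index bindex opsym} (h : QGood X) :
    ∀ z1 z2 zs, QGood (qSwap z1 z2 zs X) := by
  refine QGood.rec (motive_1 := fun X _ => ∀ z1 z2 zs, QGood (qSwap z1 z2 zs X))
    (motive_2 := fun A _ => ∀ z1 z2 zs, QGoodAbs (qSwapAbs z1 z2 zs A)) ?_ ?_ ?_ h
  · intro xs x z1 z2 zs
    rw [qSwap_qVar]; exact QGood.qVar
  · intro d inp binp _ _ hs hbs ih1 ih2 z1 z2 zs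
    rw [qSwap_qOp]
    refine QGood.qOp ?_ ?_ ?_ ?_
    · intro i X hX
      rcases Option.map_eq_some_iff.1 hX with ⟨X0, h0, rfl⟩
      exact ih1 i X0 h0 z1 z2 zs
    · intro j A hA
      rcases Option.map_eq_some_iff.1 hA with ⟨A0, h0, rfl⟩
      exact ih2 j A0 h0 z1 z2 zs
    · show smallDom var _
      unfold smallDom
      rw [idom_map]
      exact hs
    · show smallDom var _
      unfold smallDom
      rw [idom_map]
      exact hbs
  · intro xs x X _ ih z1 z2 zs
    rw [qSwapAbs_qAbs]
    exact QGoodAbs.qAbs (ih z1 z2 zs)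

theorem qGood_swaps {X : QTerm var varsort index bindex opsym} (h : QGood X) (l) :
    QGood (swaps l X) := by
  induction l with
  | nil => exact h
  | cons p l ih => exact qGood_qSwap ih p.1 p.2.1 p.2.2

/-! ### Freshness is equivariant -/

theorem qFresh_qSwap {ys : varsort} {v : var} {X : QTerm var varsort index bindex opsym}
    (h : QFresh ys v X) :
    ∀ z1 z2 zs, QFresh ys (swapVarS var varsort zs ys z1 z2 v) (qSwap z1 z2 zs X) := by
  refine QFresh.rec
    (motive_1 := fun X _ => ∀ z1 z2 zs, QFresh ys (swapVarS var varsort zs ys z1 z2 v) (qSwap z1 z2 zs X))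
    (motive_2 := fun A _ => ∀ z1 z2 zs, QFreshAbs ys (swapVarS var varsort zs ys z1 z2 v) (qSwapAbs z1 z2 zs A))
    ?_ ?_ ?_ ?_ h
  · intro xs x hne z1 z2 zs
    rw [qSwap_qVar]
    refine QFresh.qVar fun hc => hne ?_
    rw [Prod.mk.injEq] at hc ⊢
    obtain ⟨h1, h2⟩ := hc
    subst h1
    exact ⟨rfl, swapVarS_inj _ _ _ _ h2⟩
  · intro d inp binp _ _ ih1 ih2 z1 z2 zs
    rw [qSwap_qOp]
    refine QFresh.qOp ?_ ?_
    · intro i X hX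
      rcases Option.map_eq_some_iff.1 hX with ⟨X0, h0, rfl⟩
      exact ih1 i X0 h0 z1 z2 zs
    · intro j A hA
      rcases Option.map_eq_some_iff.1 hA with ⟨A0, h0, rfl⟩
      exact ih2 j A0 h0 z1 z2 zs
  · intro X z1 z2 zs
    rw [qSwapAbs_qAbs]
    exact QFreshAbs.qAbs_bound
  · intro xs x X _ ih z1 z2 zs
    rw [qSwapAbs_qAbs]
    exact QFreshAbs.qAbs_body (ih z1 z2 zs)

theorem qFreshAbs_qSwap {ys : varsort} {v : var} {A : QAbs var varsort index bindex opsym}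
    (h : QFreshAbs ys v A) :
    ∀ z1 z2 zs, QFreshAbs ys (swapVarS var varsort zs ys z1 z2 v) (qSwapAbs z1 z2 zs A) := by
  intro z1 z2 zs
  cases A with
  | qAbs xs x X =>
    rcases qFreshAbs_inv h with he | hb
    · rw [Prod.mk.injEq] at he
      obtain ⟨h1, h2⟩ := he
      subst h1; subst h2
      rw [qSwapAbs_qAbs]
      exact QFreshAbs.qAbs_bound
    · rw [qSwapAbs_qAbs]
      exact QFreshAbs.qAbs_body (qFresh_qSwap hb z1 z2 zs)

theorem qFresh_of_qSwap {ys : varsort} {w : var} {X : QTerm var varsort index bindex opsym}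
    {z1 z2 zs} (h : QFresh ys w (qSwap z1 z2 zs X)) :
    QFresh ys (swapVarS var varsort zs ys z1 z2 w) X := by
  have := qFresh_qSwap h z1 z2 zs
  rwa [qSwap_invol] at this

/-! ### Alpha is equivariant, symmetric, preserves goodness and freshness -/

theorem alpha_qSwap {X Y : QTerm var varsort index bindex opsym} (h : Alpha X Y) :
    ∀ z1 z2 zs, Alpha (qSwap z1 z2 zs X) (qSwap z1 z2 zs Y) := by
  refine Alpha.rec (motive_1 := fun X Y _ => ∀ z1 z2 zs, Alpha (qSwap z1 z2 zs X) (qSwap z1 z2 zs Y))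
    (motive_2 := fun A B _ => ∀ z1 z2 zs, AlphaAbs (qSwapAbs z1 z2 zs A) (qSwapAbs z1 z2 zs B))
    ?_ ?_ ?_ h
  · intro xs x z1 z2 zs
    rw [qSwap_qVar]
    exact Alpha.qVar
  · intro d inp binp inp' binp' h1 _ h3 _ ih1 ih2 z1 z2 zs
    rw [qSwap_qOp, qSwap_qOp]
    refine Alpha.qOp ?_ ?_ ?_ ?_
    · intro i
      rw [Option.map_eq_none_iff, Option.map_eq_none_iff]
      exact h1 i
    · intro i W W' hW hW'
      rcases Option.map_eq_some_iff.1 hW with ⟨X0, h0, rfl⟩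
      rcases Option.map_eq_some_iff.1 hW' with ⟨X0', h0', rfl⟩
      exact ih1 i X0 X0' h0 h0' z1 z2 zs
    · intro j
      rw [Option.map_eq_none_iff, Option.map_eq_none_iff]
      exact h3 j
    · intro j B B' hB hB'
      rcases Option.map_eq_some_iff.1 hB with ⟨A0, h0, rfl⟩
      rcases Option.map_eq_some_iff.1 hB' with ⟨A0', h0', rfl⟩
      exact ih2 j A0 A0' h0 h0' z1 z2 zs
  · intro xs x x' X X' y hy hf hf' _ ih z1 z2 zs
    rw [qSwapAbs_qAbs, qSwapAbs_qAbs]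
    refine AlphaAbs.qAbs (y := swapVarS var varsort zs xs z1 z2 y) ?_
      (qFresh_qSwap hf z1 z2 zs) (qFresh_qSwap hf' z1 z2 zs) ?_
    · intro hc
      simp only [Set.mem_insert_iff, Set.mem_singleton_iff] at hc hy
      rcases hc with hc | hc
      · exact hy (Or.inl (swapVarS_inj _ _ _ _ hc))
      · exact hy (Or.inr (swapVarS_inj _ _ _ _ hc))
    · have := ih z1 z2 zs
      rw [qSwap_comm z1 z2 zs y x xs X, qSwap_comm z1 z2 zs y x' xs X'] at this
      exact this

theorem alphaAbs_qSwap {A B : QAbs var varsort index bindex opsym} (h : AlphaAbs A B) :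
    ∀ z1 z2 zs, AlphaAbs (qSwapAbs z1 z2 zs A) (qSwapAbs z1 z2 zs B) := by
  intro z1 z2 zs
  cases h with
  | qAbs hy hf hf' ha =>
    rw [qSwapAbs_qAbs, qSwapAbs_qAbs]
    rename_i xs x x' X X' y
    refine AlphaAbs.qAbs (y := swapVarS var varsort zs xs z1 z2 y) ?_
      (qFresh_qSwap hf z1 z2 zs) (qFresh_qSwap hf' z1 z2 zs) ?_
    · intro hc
      simp only [Set.mem_insert_iff, Set.mem_singleton_iff] at hc hy
      rcases hc with hc | hc
      · exact hy (Or.inl (swapVarS_inj _ _ _ _ hc))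
      · exact hy (Or.inr (swapVarS_inj _ _ _ _ hc))
    · have := alpha_qSwap ha z1 z2 zs
      rw [qSwap_comm z1 z2 zs y x xs X, qSwap_comm z1 z2 zs y x' xs X'] at this
      exact this

theorem alpha_symm {X Y : QTerm var varsort index bindex opsym} (h : Alpha X Y) : Alpha Y X := by
  refine Alpha.rec (motive_1 := fun X Y _ => Alpha Y X)
    (motive_2 := fun A B _ => AlphaAbs B A) ?_ ?_ ?_ h
  · intro xs x; exact Alpha.qVar
  · intro d inp binp inp' binp' h1 _ h3 _ ih1 ih2
    refine Alpha.qOp (fun i => (h1 i).symm) ?_ (fun j => (h3 j).symm) ?_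
    · intro i X X' hX hX'
      exact ih1 i X' X hX' hX
    · intro j A A' hA hA'
      exact ih2 j A' A hA' hA
  · intro xs x x' X X' y hy hf hf' _ ih
    refine AlphaAbs.qAbs (y := y) ?_ hf' hf ih
    simp only [Set.mem_insert_iff, Set.mem_singleton_iff] at hy ⊢
    tauto

theorem alphaAbs_symm {A B : QAbs var varsort index bindex opsym} (h : AlphaAbs A B) :
    AlphaAbs B A := by
  cases h with
  | qAbs hy hf hf' ha =>
    refine AlphaAbs.qAbs (y := _) ?_ hf' hf (alpha_symm ha)
    simp only [Set.mem_insert_iff, Set.mem_singleton_iff] at hy ⊢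
    tauto

theorem alpha_good {X Y : QTerm var varsort index bindex opsym} (h : Alpha X Y) (hg : QGood X) :
    QGood Y := by
  refine Alpha.rec (motive_1 := fun X Y _ => QGood X → QGood Y)
    (motive_2 := fun A B _ => QGoodAbs A → QGoodAbs B) ?_ ?_ ?_ h hg
  · intro xs x _; exact QGood.qVar
  · intro d inp binp inp' binp' h1 _ h3 _ ih1 ih2 hg
    obtain ⟨hg1, hg2, hg3, hg4⟩ := qGood_qOp_inv hg
    refine QGood.qOp ?_ ?_ ?_ ?_
    · intro i X' hX'
      cases hX : inp i with
      | none => rw [(h1 i).1 hX] at hX'; cases hX'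
      | some X0 => exact ih1 i X0 X' hX hX' (hg1 i X0 hX)
    · intro j A' hA'
      cases hA : binp j with
      | none => rw [(h3 j).1 hA] at hA'; cases hA'
      | some A0 => exact ih2 j A0 A' hA hA' (hg2 j A0 hA)
    · unfold smallDom at hg3 ⊢
      have : idom inp' = idom inp := by
        ext i
        show inp' i ≠ none ↔ inp i ≠ none
        rw [not_iff_not]
        exact (h1 i).symm
      rwa [this]
    · unfold smallDom at hg4 ⊢
      have : idom binp' = idom binp := by
        ext j
        show binp' j ≠ none ↔ binp j ≠ none
        rw [not_iff_not]
        exact (h3 j).symm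
      rwa [this]
  · intro xs x x' X X' y _ _ _ _ ih hg
    have hX : QGood X := qGoodAbs_inv hg
    have h1 : QGood (qSwap y x' xs X') := ih (qGood_qSwap hX y x xs)
    have h2 := qGood_qSwap h1 y x' xs
    rw [qSwap_invol] at h2
    exact QGoodAbs.qAbs h2

theorem alphaAbs_good {A B : QAbs var varsort index bindex opsym} (h : AlphaAbs A B)
    (hg : QGoodAbs A) : QGoodAbs B := by
  cases h with
  | qAbs hy hf hf' ha =>
    rename_i xs x x' X X' y
    have hX := qGoodAbs_inv hg
    have h1 := alpha_good ha (qGood_qSwap hX y x xs)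
    have h2 := qGood_qSwap h1 y x' xs
    rw [qSwap_invol] at h2
    exact QGoodAbs.qAbs h2

end Dev4

section Dev5
variable {var varsort index bindex opsym : Type u}

theorem swapVar_fst (a b : var) : swapVar var a b a = b := by
  unfold swapVar; simp

theorem swapVar_snd (a b : var) : swapVar var a b b = a := by
  unfold swapVar; split_ifs with h1 h2 <;> simp_all

theorem swapVar_other {a b v : var} (h1 : v ≠ a) (h2 : v ≠ b) : swapVar var a b v = v := by
  unfold swapVar; simp [h1, h2]

theorem swapVarS_same (xs : varsort) (z1 z2 v : var) :
    swapVarS var varsort xs xs z1 z2 v = swapVar var z1 z2 v := if_pos rfl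

theorem swapVarS_of_ne {zs xs : varsort} {z1 z2 v : var} (h1 : v ≠ z1) (h2 : v ≠ z2) :
    swapVarS var varsort zs xs z1 z2 v = v := by
  unfold swapVarS
  split_ifs with h
  · exact swapVar_other h1 h2
  · rfl

theorem pair_ne_snd {ys xs : varsort} {v w : var} (h : (ys, v) ≠ (xs, w)) (hs : ys = xs) :
    v ≠ w := fun hv => h (by rw [hs, hv])

theorem swapVarS_other {zs xs : varsort} {z1 z2 w : var}
    (h1 : (zs, z1) ≠ (xs, w)) (h2 : (zs, z2) ≠ (xs, w)) :
    swapVarS var varsort zs xs z1 z2 w = w := by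
  unfold swapVarS
  split_ifs with h
  · subst h
    exact swapVar_other (pair_ne_snd h1 rfl).symm (pair_ne_snd h2 rfl).symm
  · rfl

/-! ### Freshness transfers along alpha -/

theorem freshAbs_transfer {xs : varsort} {x x' y : var} {X X' : QTerm var varsort index bindex opsym}
    (hy : y ∉ ({x, x'} : Set var)) (hfX : QFresh xs y X) (hfX' : QFresh xs y X')
    (tr : ∀ ys v, QFresh ys v (qSwap y x xs X) → QFresh ys v (qSwap y x' xs X'))
    (ys : varsort) (v : var) (hF : QFreshAbs ys v (QAbs.qAbs xs x X)) :
    QFreshAbs ys v (QAbs.qAbs xs x' X') := by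
  simp only [Set.mem_insert_iff, Set.mem_singleton_iff, not_or] at hy
  obtain ⟨hyx, hyx'⟩ := hy
  by_cases hc1 : (ys, v) = (xs, x')
  · rw [Prod.mk.injEq] at hc1
    obtain ⟨h1, h2⟩ := hc1
    subst h1; subst h2
    exact QFreshAbs.qAbs_bound
  · refine QFreshAbs.qAbs_body ?_
    by_cases hc2 : (ys, v) = (xs, x)
    · rw [Prod.mk.injEq] at hc2
      obtain ⟨h1, h2⟩ := hc2
      subst h1; subst h2
      have hxx' : v ≠ x' := pair_ne_snd hc1 rfl
      have s1 : QFresh ys v (qSwap y v ys X) := by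
        have := qFresh_qSwap hfX y v ys
        rwa [swapVarS_same, swapVar_fst] at this
      have s2 := tr _ _ s1
      have s3 := qFresh_of_qSwap s2
      rwa [swapVarS_same, swapVar_other (fun h => hyx h.symm) hxx'] at s3
    · have hbody : QFresh ys v X := by
        rcases qFreshAbs_inv hF with he | hb
        · exact absurd he hc2
        · exact hb
      by_cases hc3 : (ys, v) = (xs, y)
      · rw [Prod.mk.injEq] at hc3
        obtain ⟨h1, h2⟩ := hc3
        subst h1; subst h2
        exact hfX'
      · have hv1 : swapVarS var varsort xs ys y x v = v := by
          unfold swapVarS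
          split_ifs with h
          · exact swapVar_other (pair_ne_snd hc3 h) (pair_ne_snd hc2 h)
          · rfl
        have hv2 : swapVarS var varsort xs ys y x' v = v := by
          unfold swapVarS
          split_ifs with h
          · exact swapVar_other (pair_ne_snd hc3 h) (pair_ne_snd hc1 h)
          · rfl
        have s1 := qFresh_qSwap hbody y x xs
        rw [hv1] at s1
        have s2 := tr _ _ s1
        have s3 := qFresh_of_qSwap s2
        rwa [hv2] at s3

theorem qFresh_alpha {X Y : QTerm var varsort index bindex opsym} (h : Alpha X Y) :
    ∀ ys v, QFresh ys v X → QFresh ys v Y := by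
  refine Alpha.rec (motive_1 := fun X Y _ => ∀ ys v, QFresh ys v X → QFresh ys v Y)
    (motive_2 := fun A B _ => ∀ ys v, QFreshAbs ys v A → QFreshAbs ys v B) ?_ ?_ ?_ h
  · intro xs x ys v hF; exact hF
  · intro d inp binp inp' binp' h1 _ h3 _ ih1 ih2 ys v hF
    obtain ⟨hF1, hF2⟩ := qFresh_qOp_inv hF
    refine QFresh.qOp ?_ ?_
    · intro i X' hX'
      cases hX : inp i with
      | none => rw [(h1 i).1 hX] at hX'; cases hX'
      | some X0 => exact ih1 i X0 X' hX hX' ys v (hF1 i X0 hX)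
    · intro j A' hA'
      cases hA : binp j with
      | none => rw [(h3 j).1 hA] at hA'; cases hA'
      | some A0 => exact ih2 j A0 A' hA hA' ys v (hF2 j A0 hA)
  · intro xs x x' X X' y hy hf hf' _ ih
    exact freshAbs_transfer hy hf hf' ih

theorem qFreshAbs_alpha {A B : QAbs var varsort index bindex opsym} (h : AlphaAbs A B) :
    ∀ ys v, QFreshAbs ys v A → QFreshAbs ys v B := by
  cases h with
  | qAbs hy hf hf' ha =>
    exact freshAbs_transfer hy hf hf' (qFresh_alpha ha)

/-! ### Reflexivity on good terms -/

theorem mk_varOf_lt (hreg : (Cardinal.mk var).IsRegular)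
    {X : QTerm var varsort index bindex opsym} (h : QGood X) :
    Cardinal.mk (varOf X) < Cardinal.mk var := (mk_varOf_lt_pair hreg).1 h

theorem alpha_refl_good (hreg : (Cardinal.mk var).IsRegular)
    {X : QTerm var varsort index bindex opsym} (h : QGood X) : Alpha X X := by
  have hinf := hreg.aleph0_le
  refine QGood.rec (motive_1 := fun X _ => Alpha X X)
    (motive_2 := fun A _ => AlphaAbs A A) ?_ ?_ ?_ h
  · intro xs x; exact Alpha.qVar
  · intro d inp binp _ _ _ _ ih1 ih2
    refine Alpha.qOp (fun i => Iff.rfl) ?_ (fun j => Iff.rfl) ?_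
    · intro i X X' hX hX'
      rw [hX] at hX'
      cases hX'
      exact ih1 i X hX
    · intro j A A' hA hA'
      rw [hA] at hA'
      cases hA'
      exact ih2 j A hA
  · intro xs x X hX ih
    obtain ⟨u, hu⟩ := exists_notMem (mk_insert_lt hinf (mk_varOf_lt hreg hX) (a := x))
    simp only [Set.mem_insert_iff, not_or] at hu
    obtain ⟨hux, huX⟩ := hu
    refine AlphaAbs.qAbs (y := u) ?_ (qFresh_of_notMem_varOf huX) (qFresh_of_notMem_varOf huX)
      (alpha_qSwap ih u x xs)
    simp [hux]

/-! ### Swapping two fresh variables is an alpha-variant -/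

theorem alpha_qSwap_self_pair (hreg : (Cardinal.mk var).IsRegular) :
    (∀ X : QTerm var varsort index bindex opsym, QGood X → ∀ l z1 z2 zs,
        QFresh zs z1 (swaps l X) → QFresh zs z2 (swaps l X) →
        Alpha (qSwap z1 z2 zs (swaps l X)) (swaps l X)) ∧
    (∀ A : QAbs var varsort index bindex opsym, QGoodAbs A → ∀ l z1 z2 zs,
        QFreshAbs zs z1 (swapsAbs l A) → QFreshAbs zs z2 (swapsAbs l A) →
        AlphaAbs (qSwapAbs z1 z2 zs (swapsAbs l A)) (swapsAbs l A)) := by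
  have hinf := hreg.aleph0_le
  apply qterm_qabs_ind
  · intro vs v _ l z1 z2 zs h1 h2
    rw [swaps_qVar] at h1 h2 ⊢
    rw [qSwap_qVar]
    rw [swapVarS_other (qFresh_qVar_inv h1) (qFresh_qVar_inv h2)]
    exact Alpha.qVar
  · intro d inp binp ih1 ih2 hg l z1 z2 zs h1 h2
    obtain ⟨hg1, hg2, _, _⟩ := qGood_qOp_inv hg
    rw [swaps_qOp] at h1 h2 ⊢
    obtain ⟨h11, h12⟩ := qFresh_qOp_inv h1
    obtain ⟨h21, h22⟩ := qFresh_qOp_inv h2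
    rw [qSwap_qOp]
    refine Alpha.qOp ?_ ?_ ?_ ?_
    · intro i; rw [Option.map_eq_none_iff]
    · intro i W W' hW hW'
      rcases Option.map_eq_some_iff.1 hW' with ⟨Xi, h0, rfl⟩
      rcases Option.map_eq_some_iff.1 hW with ⟨W0, hW0, rfl⟩
      rcases Option.map_eq_some_iff.1 hW0 with ⟨Xi', h0', hh⟩
      rw [h0'] at h0
      cases h0
      subst hh
      exact ih1 i Xi h0' (hg1 i Xi h0') l z1 z2 zs
        (h11 i _ (by rw [h0']; rfl)) (h21 i _ (by rw [h0']; rfl))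
    · intro j; rw [Option.map_eq_none_iff]
    · intro j W W' hW hW'
      rcases Option.map_eq_some_iff.1 hW' with ⟨Aj, h0, rfl⟩
      rcases Option.map_eq_some_iff.1 hW with ⟨W0, hW0, rfl⟩
      rcases Option.map_eq_some_iff.1 hW0 with ⟨Aj', h0', hh⟩
      rw [h0'] at h0
      cases h0
      subst hh
      exact ih2 j Aj h0' (hg2 j Aj h0') l z1 z2 zs
        (h12 j _ (by rw [h0']; rfl)) (h22 j _ (by rw [h0']; rfl))
  · intro xs xv B ih hg l z1 z2 zs h1 h2
    have hgB : QGood B := qGoodAbs_inv hg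
    have hgA : QGood (swaps l B) := qGood_swaps hgB l
    rw [swapsAbs_qAbs] at h1 h2 ⊢
    set bv := swapsVar l xs xv with hbv
    set A := swaps l B with hA
    have hcard : Cardinal.mk
        (insert z1 (insert z2 (insert bv (insert (swapVarS var varsort zs xs z1 z2 bv) (varOf A)))) : Set var)
        < Cardinal.mk var :=
      mk_insert_lt hinf (mk_insert_lt hinf (mk_insert_lt hinf
        (mk_insert_lt hinf (mk_varOf_lt hreg hgA))))
    obtain ⟨u, hu⟩ := exists_notMem hcard
    simp only [Set.mem_insert_iff, not_or] at hu
    obtain ⟨hu1, hu2, hu3, hu4, hu5⟩ := hu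
    rw [qSwapAbs_qAbs]
    refine AlphaAbs.qAbs (y := u) ?_
      (qFresh_of_notMem_varOf (notMem_varOf_qSwap hu5 hu1 hu2))
      (qFresh_of_notMem_varOf hu5) ?_
    · simp only [Set.mem_insert_iff, Set.mem_singleton_iff, not_or]
      exact ⟨hu4, hu3⟩
    · have hσu : swapVarS var varsort zs xs z1 z2 u = u := swapVarS_of_ne hu1 hu2
      have hcomm := qSwap_comm z1 z2 zs u bv xs A
      rw [hσu] at hcomm
      rw [← hcomm]
      have freshgoal : ∀ zi : var, QFreshAbs zs zi (QAbs.qAbs xs bv A) → zi ≠ u →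
          QFresh zs zi (qSwap u bv xs A) := by
        intro zi hzi hziu
        by_cases hcz : (zs, zi) = (xs, bv)
        · rw [Prod.mk.injEq] at hcz
          obtain ⟨hs, hv⟩ := hcz
          subst hs; subst hv
          have := qFresh_qSwap (qFresh_of_notMem_varOf hu5 (ys := zs)) u bv zs
          rwa [swapVarS_same, swapVar_fst] at this
        · have hb : QFresh zs zi A := by
            rcases qFreshAbs_inv hzi with he | hb
            · exact absurd he hcz
            · exact hb
          have hσ : swapVarS var varsort xs zs u bv zi = zi := by
            unfold swapVarS
            split_ifs with h
            · exact swapVar_other hziu (pair_ne_snd hcz h)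
            · rfl
          have := qFresh_qSwap hb u bv xs
          rwa [hσ] at this
      exact ih hgB ((u, bv, xs) :: l) z1 z2 zs
        (freshgoal z1 h1 (fun h => hu1 h.symm)) (freshgoal z2 h2 (fun h => hu2 h.symm))

theorem alpha_qSwap_self (hreg : (Cardinal.mk var).IsRegular)
    {X : QTerm var varsort index bindex opsym} (hg : QGood X) {z1 z2 : var} {zs : varsort}
    (h1 : QFresh zs z1 X) (h2 : QFresh zs z2 X) : Alpha (qSwap z1 z2 zs X) X := by
  have := (alpha_qSwap_self_pair hreg).1 X hg [] z1 z2 zs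
  rw [swaps_nil] at this
  exact this h1 h2

end Dev5

section Dev6
variable {var varsort index bindex opsym : Type u}

theorem alpha_trans_pair (hreg : (Cardinal.mk var).IsRegular) :
    (∀ X : QTerm var varsort index bindex opsym, QGood X → ∀ l Y Z,
        Alpha (swaps l X) Y → Alpha Y Z → Alpha (swaps l X) Z) ∧
    (∀ A : QAbs var varsort index bindex opsym, QGoodAbs A → ∀ l B C,
        AlphaAbs (swapsAbs l A) B → AlphaAbs B C → AlphaAbs (swapsAbs l A) C) := by
  have hinf := hreg.aleph0_le
  apply qterm_qabs_ind
  · intro vs v _ l Y Z h1 h2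
    rw [swaps_qVar] at h1 ⊢
    cases h1
    cases h2
    exact Alpha.qVar
  · intro d inp binp ih1 ih2 hg l Y Z h1 h2
    obtain ⟨hg1, hg2, _, _⟩ := qGood_qOp_inv hg
    rw [swaps_qOp] at h1 ⊢
    cases h1 with
    | qOp hn1 hc1 hm1 hd1 =>
      cases h2 with
      | qOp hn2 hc2 hm2 hd2 =>
        rename_i inp1 binp1 inp2 binp2
        refine Alpha.qOp (fun i => (hn1 i).trans (hn2 i)) ?_
          (fun j => (hm1 j).trans (hm2 j)) ?_
        · intro i W Zi hW hZi
          rcases Option.map_eq_some_iff.1 hW with ⟨Xi, h0, rfl⟩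
          cases hY : inp1 i with
          | none =>
            rw [(hn2 i).1 hY] at hZi
            cases hZi
          | some Yi =>
            exact ih1 i Xi h0 (hg1 i Xi h0) l Yi Zi (hc1 i _ Yi hW hY) (hc2 i Yi Zi hY hZi)
        · intro j W Cj hW hCj
          rcases Option.map_eq_some_iff.1 hW with ⟨Aj, h0, rfl⟩
          cases hB : binp1 j with
          | none =>
            rw [(hm2 j).1 hB] at hCj
            cases hCj
          | some Bj =>
            exact ih2 j Aj h0 (hg2 j Aj h0) l Bj Cj (hd1 j _ Bj hW hB) (hd2 j Bj Cj hB hCj)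
  · intro xs xv B ih hg l Bb Cc h1 h2
    have hgB : QGood B := qGoodAbs_inv hg
    have hgA : QGood (swaps l B) := qGood_swaps hgB l
    rw [swapsAbs_qAbs] at h1 ⊢
    set bv := swapsVar l xs xv with hbv
    set A := swaps l B with hA
    cases h1 with
    | qAbs hy1 hf1 hf1' ha1 =>
      rename_i y1 Y1 u1
      cases h2 with
      | qAbs hy2 hf2 hf2' ha2 =>
        rename_i z1v Z1 u2
        -- goodness
        have hgY1 : QGood Y1 := by
          have := alpha_good ha1 (qGood_qSwap hgA u1 bv xs)
          have h' := qGood_qSwap this u1 y1 xs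
          rwa [qSwap_invol] at h'
        have hgZ1 : QGood Z1 := by
          have := alpha_good ha2 (qGood_qSwap hgY1 u2 y1 xs)
          have h' := qGood_qSwap this u2 z1v xs
          rwa [qSwap_invol] at h'
        simp only [Set.mem_insert_iff, Set.mem_singleton_iff, not_or] at hy1 hy2
        obtain ⟨hu1bv, hu1y1⟩ := hy1
        obtain ⟨hu2y1, hu2z1⟩ := hy2
        -- pick u
        have hcard : Cardinal.mk
            (insert bv (insert y1 (insert z1v (insert u1 (insert u2
              (varOf A ∪ (varOf Y1 ∪ varOf Z1)))))) : Set var) < Cardinal.mk var := by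
          refine mk_insert_lt hinf (mk_insert_lt hinf (mk_insert_lt hinf (mk_insert_lt hinf
            (mk_insert_lt hinf (mk_union_lt hinf (mk_varOf_lt hreg hgA)
              (mk_union_lt hinf (mk_varOf_lt hreg hgY1) (mk_varOf_lt hreg hgZ1)))))))
        obtain ⟨u, hu⟩ := exists_notMem hcard
        simp only [Set.mem_insert_iff, Set.mem_union, not_or] at hu
        obtain ⟨hubv, huy1, huz1, huu1, huu2, huA, huY1, huZ1⟩ := hu
        have hfuA : QFresh xs u A := qFresh_of_notMem_varOf huA
        have hfuY1 : QFresh xs u Y1 := qFresh_of_notMem_varOf huY1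
        have hfuZ1 : QFresh xs u Z1 := qFresh_of_notMem_varOf huZ1
        -- chain
        have s1 : Alpha (qSwap u u1 xs A) A := alpha_qSwap_self hreg hgA hfuA hf1
        have t1 : Alpha (qSwap u bv xs A) (qSwap u bv xs (qSwap u u1 xs A)) :=
          alpha_symm (alpha_qSwap s1 u bv xs)
        have ee := alpha_qSwap ha1 u u1 xs
        rw [qSwap_comm u u1 xs u1 bv xs A, qSwap_comm u u1 xs u1 y1 xs Y1] at ee
        simp only [swapVarS_same] at ee
        rw [swapVar_snd,
          swapVar_other (fun h => hubv h.symm) (fun h => hu1bv h.symm),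
          swapVar_other (fun h => huy1 h.symm) (fun h => hu1y1 h.symm)] at ee
        -- ee : Alpha (qSwap u bv xs (qSwap u u1 xs A)) (qSwap u y1 xs (qSwap u u1 xs Y1))
        have t2 : Alpha (qSwap u bv xs A) (qSwap u y1 xs (qSwap u u1 xs Y1)) :=
          ih hgB ((u, bv, xs) :: l) _ _ t1 ee
        have s3 : Alpha (qSwap u u1 xs Y1) Y1 := alpha_qSwap_self hreg hgY1 hfuY1 hf1'
        have t3 : Alpha (qSwap u bv xs A) (qSwap u y1 xs Y1) :=
          ih hgB ((u, bv, xs) :: l) _ _ t2 (alpha_qSwap s3 u y1 xs)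
        have ee2 := alpha_qSwap ha2 u u2 xs
        rw [qSwap_comm u u2 xs u2 y1 xs Y1, qSwap_comm u u2 xs u2 z1v xs Z1] at ee2
        simp only [swapVarS_same] at ee2
        rw [swapVar_snd,
          swapVar_other (fun h => huy1 h.symm) (fun h => hu2y1 h.symm),
          swapVar_other (fun h => huz1 h.symm) (fun h => hu2z1 h.symm)] at ee2
        -- ee2 : Alpha (qSwap u y1 xs (qSwap u u2 xs Y1)) (qSwap u z1v xs (qSwap u u2 xs Z1))
        have s5 : Alpha (qSwap u u2 xs Y1) Y1 := alpha_qSwap_self hreg hgY1 hfuY1 hf2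
        have t4 : Alpha (qSwap u bv xs A) (qSwap u y1 xs (qSwap u u2 xs Y1)) :=
          ih hgB ((u, bv, xs) :: l) _ _ t3 (alpha_symm (alpha_qSwap s5 u y1 xs))
        have t5 : Alpha (qSwap u bv xs A) (qSwap u z1v xs (qSwap u u2 xs Z1)) :=
          ih hgB ((u, bv, xs) :: l) _ _ t4 ee2
        have s6 : Alpha (qSwap u u2 xs Z1) Z1 := alpha_qSwap_self hreg hgZ1 hfuZ1 hf2'
        have t6 : Alpha (qSwap u bv xs A) (qSwap u z1v xs Z1) :=
          ih hgB ((u, bv, xs) :: l) _ _ t5 (alpha_qSwap s6 u z1v xs)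
        exact AlphaAbs.qAbs (y := u)
          (by simp only [Set.mem_insert_iff, Set.mem_singleton_iff, not_or]; exact ⟨hubv, huz1⟩)
          hfuA hfuZ1 t6

theorem alpha_trans (hreg : (Cardinal.mk var).IsRegular)
    {X Y Z : QTerm var varsort index bindex opsym} (hg : QGood X)
    (h1 : Alpha X Y) (h2 : Alpha Y Z) : Alpha X Z := by
  have := (alpha_trans_pair hreg).1 X hg [] Y Z
  rw [swaps_nil] at this
  exact this h1 h2

end Dev6

section Dev7
variable {var varsort index bindex opsym : Type u}

theorem alpha_of_eqvGen (hreg : (Cardinal.mk var).IsRegular)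
    {a b : QTerm var varsort index bindex opsym}
    (h : Relation.EqvGen Alpha a b) (hg : QGood a ∨ QGood b) : Alpha a b := by
  induction h with
  | rel a b h => exact h
  | refl a => rcases hg with hg | hg <;> exact alpha_refl_good hreg hg
  | symm a b h ih => exact alpha_symm (ih hg.symm)
  | trans a b c h1 h2 ih1 ih2 =>
    rcases hg with hga | hgc
    · have h1' := ih1 (Or.inl hga)
      have hgb := alpha_good h1' hga
      exact alpha_trans hreg hga h1' (ih2 (Or.inl hgb))
    · have h2' := ih2 (Or.inr hgc)
      have hgb := alpha_good (alpha_symm h2') hgc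
      have h1' := ih1 (Or.inr hgb)
      have hga := alpha_good (alpha_symm h1') hgb
      exact alpha_trans hreg hga h1' h2'

theorem alpha_qVar_iff {a b : QTerm var varsort index bindex opsym} (h : Alpha a b)
    (xs : varsort) (y : var) : a = .qVar xs y ↔ b = .qVar xs y := by
  cases h <;> simp_all

theorem eqvGen_qVar {a : QTerm var varsort index bindex opsym} {xs : varsort} {y : var}
    (h : Relation.EqvGen Alpha a (.qVar xs y)) : a = .qVar xs y := by
  suffices H : ∀ (a b : QTerm var varsort index bindex opsym), Relation.EqvGen Alpha a b →
      (a = .qVar xs y ↔ b = .qVar xs y) by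
    exact (H _ _ h).2 rfl
  intro a b h
  induction h with
  | rel a b h => exact alpha_qVar_iff h xs y
  | refl a => exact Iff.rfl
  | symm a b _ ih => exact ih.symm
  | trans a b c _ _ ih1 ih2 => exact ih1.trans ih2

theorem trep_Var (xs : varsort) (y : var) :
    trep (Var xs y : Term var varsort index bindex opsym) = .qVar xs y := by
  have h : tmk (trep (Var xs y : Term var varsort index bindex opsym))
      = tmk (.qVar xs y : QTerm var varsort index bindex opsym) := Quot.out_eq _
  exact eqvGen_qVar (Quot.eq.1 h)

theorem smallDom_of_iff {α β γ : Type u} {inp : α → Option β} {inp' : α → Option γ}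
    (h : ∀ a, inp a = none ↔ inp' a = none) (hs : smallDom var inp) : smallDom var inp' := by
  unfold smallDom at hs ⊢
  have : idom inp' = idom inp := by
    ext a
    show inp' a ≠ none ↔ inp a ≠ none
    rw [not_iff_not]
    exact (h a).symm
  rwa [this]

theorem qSubst_good {X Y : QTerm var varsort index bindex opsym} {y ys Z}
    (h : QSubst X Y y ys Z) : QGood X → QGood Y → QGood Z := by
  refine QSubst.rec (motive_1 := fun X Y y ys Z _ => QGood X → QGood Y → QGood Z)
    (motive_2 := fun A Y y ys C _ => QGoodAbs A → QGood Y → QGoodAbs C)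
    ?_ ?_ ?_ ?_ h
  · intro Y y ys _ hY; exact hY
  · intro Y y ys xs x _ _ _; exact QGood.qVar
  · intro Y y ys d inp binp inp' binp' h1 _ h3 _ ih1 ih2 hg hY
    obtain ⟨hg1, hg2, hg3, hg4⟩ := qGood_qOp_inv hg
    refine QGood.qOp ?_ ?_ (smallDom_of_iff h1 hg3) (smallDom_of_iff h3 hg4)
    · intro i X' hX'
      cases hX : inp i with
      | none => rw [(h1 i).1 hX] at hX'; cases hX'
      | some X0 => exact ih1 i X0 X' hX hX' (hg1 i X0 hX) hY
    · intro j A' hA'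
      cases hA : binp j with
      | none => rw [(h3 j).1 hA] at hA'; cases hA'
      | some A0 => exact ih2 j A0 A' hA hA' (hg2 j A0 hA) hY
  · intro Y y ys xs x X X' _ _ _ ih hg hY
    exact QGoodAbs.qAbs (ih (qGoodAbs_inv hg) hY)

theorem qSubst_fresh_alpha (hreg : (Cardinal.mk var).IsRegular)
    {X Y : QTerm var varsort index bindex opsym} {y0 : var} {ys : varsort} {Z}
    (h : QSubst X Y y0 ys Z) :
    ∀ yv, Y = .qVar ys yv → QFresh ys yv X → QGood X → Alpha Z (qSwap yv y0 ys X) := by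
  have hinf := hreg.aleph0_le
  refine QSubst.rec
    (motive_1 := fun X Y y0 ys Z _ =>
      ∀ yv, Y = .qVar ys yv → QFresh ys yv X → QGood X → Alpha Z (qSwap yv y0 ys X))
    (motive_2 := fun A Y y0 ys C _ =>
      ∀ yv, Y = .qVar ys yv → QFreshAbs ys yv A → QGoodAbs A → AlphaAbs C (qSwapAbs yv y0 ys A))
    ?_ ?_ ?_ ?_ h
  · intro Y y ys yv hY _ _
    subst hY
    rw [qSwap_qVar, swapVarS_same, swapVar_snd]
    exact Alpha.qVar
  · intro Y y ys xs2 x2 hne yv hY hF _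
    rw [qSwap_qVar, swapVarS_other (qFresh_qVar_inv hF) (Ne.symm hne)]
    exact Alpha.qVar
  · intro Y y ys d inp binp inp' binp' h1 _ h3 _ ih1 ih2 yv hY hF hG
    obtain ⟨hF1, hF2⟩ := qFresh_qOp_inv hF
    obtain ⟨hG1, hG2, _, _⟩ := qGood_qOp_inv hG
    rw [qSwap_qOp]
    refine Alpha.qOp ?_ ?_ ?_ ?_
    · intro i
      rw [Option.map_eq_none_iff]
      exact (h1 i).symm
    · intro i Zi W hZi hW
      rcases Option.map_eq_some_iff.1 hW with ⟨Xi, h0, rfl⟩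
      exact ih1 i Xi Zi h0 hZi yv hY (hF1 i Xi h0) (hG1 i Xi h0)
    · intro j
      rw [Option.map_eq_none_iff]
      exact (h3 j).symm
    · intro j Cj W hCj hW
      rcases Option.map_eq_some_iff.1 hW with ⟨Aj, h0, rfl⟩
      exact ih2 j Aj Cj h0 hCj yv hY (hF2 j Aj h0) (hG2 j Aj h0)
  · intro Y y ys bs bx B B' ane afr asub ih yv hY hfrA hgA
    subst hY
    have hbxyv : (bs, bx) ≠ (ys, yv) := qFresh_qVar_inv afr
    have hfrB : QFresh ys yv B := by
      rcases qFreshAbs_inv hfrA with he | hb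
      · exact absurd he.symm hbxyv
      · exact hb
    have hgB : QGood B := qGoodAbs_inv hgA
    have hgB' : QGood B' := qSubst_good asub hgB QGood.qVar
    have ihB : Alpha B' (qSwap yv y ys B) := ih yv rfl hfrB hgB
    rw [qSwapAbs_qAbs, swapVarS_other (Ne.symm hbxyv) (Ne.symm ane)]
    have hcard : Cardinal.mk
        (insert bx (insert yv (insert y (varOf B ∪ varOf B'))) : Set var) < Cardinal.mk var :=
      mk_insert_lt hinf (mk_insert_lt hinf (mk_insert_lt hinf
        (mk_union_lt hinf (mk_varOf_lt hreg hgB) (mk_varOf_lt hreg hgB'))))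
    obtain ⟨u, hu⟩ := exists_notMem hcard
    simp only [Set.mem_insert_iff, Set.mem_union, not_or] at hu
    obtain ⟨hubx, huyv, huy, huB, huB'⟩ := hu
    refine AlphaAbs.qAbs (y := u) ?_ (qFresh_of_notMem_varOf huB')
      (qFresh_of_notMem_varOf (notMem_varOf_qSwap huB huyv huy))
      (alpha_qSwap ihB u bx bs)
    simp only [Set.mem_insert_iff, Set.mem_singleton_iff, not_or]
    exact ⟨hubx, hubx⟩

theorem qsubst_exists_pair (hreg : (Cardinal.mk var).IsRegular) (xs : varsort) (xv yv : var) :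
    (∀ X : QTerm var varsort index bindex opsym, QGood X → ∀ l,
        ∃ X' Z, Alpha (swaps l X) X' ∧ QSubst X' (.qVar xs yv) xv xs Z) ∧
    (∀ A : QAbs var varsort index bindex opsym, QGoodAbs A → ∀ l,
        ∃ A' C, AlphaAbs (swapsAbs l A) A' ∧ QSubstAbs A' (.qVar xs yv) xv xs C) := by
  have hinf := hreg.aleph0_le
  apply qterm_qabs_ind
  · intro vs v _ l
    rw [swaps_qVar]
    by_cases h : (vs, swapsVar l vs v) = (xs, xv)
    · rw [Prod.mk.injEq] at h
      obtain ⟨h1, h2⟩ := h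
      subst h1
      rw [h2]
      exact ⟨_, _, Alpha.qVar, QSubst.var_eq⟩
    · exact ⟨_, _, Alpha.qVar, QSubst.var_ne h⟩
  · intro d inp binp ih1 ih2 hg l
    obtain ⟨hg1, hg2, _, _⟩ := qGood_qOp_inv hg
    have H1 : ∀ i, ∃ p : Option (QTerm var varsort index bindex opsym × QTerm var varsort index bindex opsym),
        (inp i = none → p = none) ∧
        ∀ Xi, inp i = some Xi → ∃ X' Z, p = some (X', Z) ∧ Alpha (swaps l Xi) X'
          ∧ QSubst X' (.qVar xs yv) xv xs Z := by
      intro i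
      cases h : inp i with
      | none =>
        refine ⟨none, fun _ => rfl, fun Xi hXi => ?_⟩
        cases hXi
      | some Xi0 =>
        obtain ⟨X', Z, hA, hS⟩ := ih1 i Xi0 h (hg1 i Xi0 h) l
        refine ⟨some (X', Z), ?_, ?_⟩
        · intro hc; cases hc
        · intro Xi hXi
          cases hXi
          exact ⟨X', Z, rfl, hA, hS⟩
    have H2 : ∀ j, ∃ p : Option (QAbs var varsort index bindex opsym × QAbs var varsort index bindex opsym),
        (binp j = none → p = none) ∧
        ∀ Aj, binp j = some Aj → ∃ A' C, p = some (A', C) ∧ AlphaAbs (swapsAbs l Aj) A'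
          ∧ QSubstAbs A' (.qVar xs yv) xv xs C := by
      intro j
      cases h : binp j with
      | none =>
        refine ⟨none, fun _ => rfl, fun Aj hAj => ?_⟩
        cases hAj
      | some Aj0 =>
        obtain ⟨A', C, hA, hS⟩ := ih2 j Aj0 h (hg2 j Aj0 h) l
        refine ⟨some (A', C), ?_, ?_⟩
        · intro hc; cases hc
        · intro Aj hAj
          cases hAj
          exact ⟨A', C, rfl, hA, hS⟩
    choose f hf1 hf2 using H1
    choose g hg1' hg2' using H2
    have key1 : ∀ i p, f i = some p → ∃ Xi, inp i = some Xi ∧ Alpha (swaps l Xi) p.1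
        ∧ QSubst p.1 (.qVar xs yv) xv xs p.2 := by
      intro i p hp
      cases h : inp i with
      | none => rw [hf1 i h] at hp; cases hp
      | some Xi =>
        obtain ⟨X', Z, hfi, hA, hS⟩ := hf2 i Xi h
        rw [hfi] at hp
        cases hp
        exact ⟨Xi, rfl, hA, hS⟩
    have key2 : ∀ j p, g j = some p → ∃ Aj, binp j = some Aj ∧ AlphaAbs (swapsAbs l Aj) p.1
        ∧ QSubstAbs p.1 (.qVar xs yv) xv xs p.2 := by
      intro j p hp
      cases h : binp j with
      | none => rw [hg1' j h] at hp; cases hp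
      | some Aj =>
        obtain ⟨A', C, hfj, hA, hS⟩ := hg2' j Aj h
        rw [hfj] at hp
        cases hp
        exact ⟨Aj, rfl, hA, hS⟩
    have hnone1 : ∀ i, inp i = none ↔ f i = none := by
      intro i
      constructor
      · exact hf1 i
      · intro hfi
        cases h : inp i with
        | none => rfl
        | some Xi =>
          obtain ⟨X', Z, hfi', _, _⟩ := hf2 i Xi h
          rw [hfi'] at hfi; cases hfi
    have hnone2 : ∀ j, binp j = none ↔ g j = none := by
      intro j
      constructor
      · exact hg1' j
      · intro hgj
        cases h : binp j with
        | none => rfl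
        | some Aj =>
          obtain ⟨A', C, hgj', _, _⟩ := hg2' j Aj h
          rw [hgj'] at hgj; cases hgj
    refine ⟨.qOp d (fun i => (f i).map Prod.fst) (fun j => (g j).map Prod.fst),
      .qOp d (fun i => (f i).map Prod.snd) (fun j => (g j).map Prod.snd), ?_, ?_⟩
    · rw [swaps_qOp]
      refine Alpha.qOp ?_ ?_ ?_ ?_
      · intro i
        rw [Option.map_eq_none_iff, Option.map_eq_none_iff]
        exact hnone1 i
      · intro i W W' hW hW'
        rcases Option.map_eq_some_iff.1 hW with ⟨Xi, h0, rfl⟩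
        rcases Option.map_eq_some_iff.1 hW' with ⟨p, hp, rfl⟩
        obtain ⟨Xi', h0', hA, _⟩ := key1 i p hp
        rw [h0'] at h0
        cases h0
        exact hA
      · intro j
        rw [Option.map_eq_none_iff, Option.map_eq_none_iff]
        exact hnone2 j
      · intro j W W' hW hW'
        rcases Option.map_eq_some_iff.1 hW with ⟨Aj, h0, rfl⟩
        rcases Option.map_eq_some_iff.1 hW' with ⟨p, hp, rfl⟩
        obtain ⟨Aj', h0', hA, _⟩ := key2 j p hp
        rw [h0'] at h0
        cases h0
        exact hA
    · refine QSubst.op ?_ ?_ ?_ ?_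
      · intro i
        rw [Option.map_eq_none_iff, Option.map_eq_none_iff]
      · intro i W W' hW hW'
        rcases Option.map_eq_some_iff.1 hW with ⟨p, hp, rfl⟩
        rcases Option.map_eq_some_iff.1 hW' with ⟨p', hp', rfl⟩
        rw [hp] at hp'
        cases hp'
        obtain ⟨Xi, _, _, hS⟩ := key1 i p hp
        exact hS
      · intro j
        rw [Option.map_eq_none_iff, Option.map_eq_none_iff]
      · intro j W W' hW hW'
        rcases Option.map_eq_some_iff.1 hW with ⟨p, hp, rfl⟩
        rcases Option.map_eq_some_iff.1 hW' with ⟨p', hp', rfl⟩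
        rw [hp] at hp'
        cases hp'
        obtain ⟨Aj, _, _, hS⟩ := key2 j p hp
        exact hS
  · intro zs z B ih hg l
    have hgB := qGoodAbs_inv hg
    have hgA : QGood (swaps l B) := qGood_swaps hgB l
    rw [swapsAbs_qAbs]
    set bv := swapsVar l zs z with hbv
    set A := swaps l B with hA
    have hcard : Cardinal.mk (insert xv (insert yv (insert bv (varOf A))) : Set var)
        < Cardinal.mk var :=
      mk_insert_lt hinf (mk_insert_lt hinf (mk_insert_lt hinf (mk_varOf_lt hreg hgA)))
    obtain ⟨u, hu⟩ := exists_notMem hcard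
    simp only [Set.mem_insert_iff, not_or] at hu
    obtain ⟨huxv, huyv, hubv, huA⟩ := hu
    obtain ⟨X', Z, hA', hS⟩ := ih hgB ((u, bv, zs) :: l)
    have hA'' : Alpha (qSwap u bv zs A) X' := hA'
    have hgswap : QGood (qSwap u bv zs A) := qGood_qSwap hgA u bv zs
    have hgX' : QGood X' := alpha_good hA'' hgswap
    refine ⟨.qAbs zs u X', .qAbs zs u Z, ?_, ?_⟩
    · have hcard2 : Cardinal.mk (insert u (insert bv (varOf A ∪ varOf X')) : Set var)
          < Cardinal.mk var :=
        mk_insert_lt hinf (mk_insert_lt hinf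
          (mk_union_lt hinf (mk_varOf_lt hreg hgA) (mk_varOf_lt hreg hgX')))
      obtain ⟨w, hw⟩ := exists_notMem hcard2
      simp only [Set.mem_insert_iff, Set.mem_union, not_or] at hw
      obtain ⟨hwu, hwbv, hwA, hwX'⟩ := hw
      refine AlphaAbs.qAbs (y := w) ?_ (qFresh_of_notMem_varOf hwA)
        (qFresh_of_notMem_varOf hwX') ?_
      · simp only [Set.mem_insert_iff, Set.mem_singleton_iff, not_or]
        exact ⟨hwbv, hwu⟩
      · have step1 := alpha_qSwap hA'' w u zs
        rw [qSwap_comm w u zs u bv zs A] at step1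
        simp only [swapVarS_same] at step1
        rw [swapVar_snd,
          swapVar_other (fun h => hwbv h.symm) (fun h => hubv h.symm)] at step1
        have s := alpha_qSwap_self hreg hgA (qFresh_of_notMem_varOf hwA (ys := zs))
          (qFresh_of_notMem_varOf huA (ys := zs))
        have e := alpha_qSwap s w bv zs
        exact alpha_trans hreg (qGood_qSwap hgA w bv zs) (alpha_symm e) step1
    · refine QSubstAbs.abs ?_ (QFresh.qVar ?_) hS
      · intro h
        exact huxv (congrArg Prod.snd h)
      · intro h
        exact huyv (congrArg Prod.snd h)

theorem subst_eq_swap (hreg : (Cardinal.mk var).IsRegular)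
    {X : Term var varsort index bindex opsym} (hX : good X) (xs : varsort) (x y : var)
    (hfr : fresh xs y X) :
    subst X (Var xs y) x xs = tmk (qSwap y x xs (trep X)) := by
  have hgood : QGood (trep X) := hX
  have htV : trep (Var xs y : Term var varsort index bindex opsym) = .qVar xs y := trep_Var xs y
  obtain ⟨X', Z, hA, hS⟩ := (qsubst_exists_pair hreg xs x y).1 (trep X) hgood []
  rw [swaps_nil] at hA
  have hex : ∃ Zt, SubstRel X (Var xs y) x xs Zt := by
    refine ⟨tmk Z, X', Z, ?_, rfl, ?_⟩
    · have h1 : tmk (trep X) = tmk X' := Quot.sound hA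
      rw [← h1]
      exact Quot.out_eq X
    · rw [htV]
      exact hS
  rw [subst, dif_pos hex]
  obtain ⟨qX, qZ, hq1, hq2, hq3⟩ := hex.choose_spec
  rw [← hq2]
  apply Quot.sound
  have hmm : tmk qX = tmk (trep X) := by
    rw [hq1]
    exact (Quot.out_eq X).symm
  have hEq : Relation.EqvGen Alpha qX (trep X) := Quot.eq.1 hmm
  have hAq : Alpha qX (trep X) := alpha_of_eqvGen hreg hEq (Or.inr hgood)
  have hgq : QGood qX := alpha_good (alpha_symm hAq) hgood
  have hfrq : QFresh xs y qX := qFresh_alpha (alpha_symm hAq) xs y hfr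
  rw [htV] at hq3
  have h1 : Alpha qZ (qSwap y x xs qX) := qSubst_fresh_alpha hreg hq3 y rfl hfrq hgq
  have h2 : Alpha (qSwap y x xs qX) (qSwap y x xs (trep X)) := alpha_qSwap hAq y x xs
  exact alpha_trans hreg (qSubst_good hq3 hgq QGood.qVar) h1 h2

end Dev7

/-- for good terms `X`, `X'`, if `y ∉ {x,x'}` is fresh for both and
the substitutions of `Var xs y` for `x` resp. `x'` agree, then the abstractions
`Abs xs x X` and `Abs xs x' X'` are equal. -/
theorem abs_eq_of_subst (hinf : Cardinal.aleph0 ≤ Cardinal.mk var)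
    (hreg : (Cardinal.mk var).IsRegular)
    (X X' : Term var varsort index bindex opsym) (hX : good X) (hX' : good X')
    (xs : varsort) (x x' y : var)
    (hy : y ∉ ({x, x'} : Set var))
    (hfr : fresh xs y X) (hfr' : fresh xs y X')
    (heq : subst X (Var xs y) x xs = subst X' (Var xs y) x' xs) :
    Abs xs x X = Abs xs x' X' := by
  rw [subst_eq_swap hreg hX xs x y hfr, subst_eq_swap hreg hX' xs x' y hfr'] at heq
  have hEq : Relation.EqvGen Alpha (qSwap y x xs (trep X)) (qSwap y x' xs (trep X')) :=
    Quot.eq.1 heq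
  have hg1 : QGood (qSwap y x xs (trep X)) := qGood_qSwap hX y x xs
  have hA := alpha_of_eqvGen hreg hEq (Or.inl hg1)
  exact Quot.sound (AlphaAbs.qAbs hy hfr hfr' hA)

end Binding
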